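/- Let Φ be an H-orbit of characters of A such that M := span(Φ) ⊆ ℂ[A] is an irreducible G-subrepresentation, and set S := {(1/|Φ|) Σ_{χ∈Φ} χ(a) : a ∈ A} ⊆ ℂ. Regard ℂ[G] as a left G-representation and identify its elements with functions G → ℂ. Let W be the M-isotypic component of ℂ[G] (the sum of all subrepresentations isomorphic to M), and let W^H := {f ∈ W : f(h·x) = f(x) for all h ∈ H, x ∈ G}. Then W^H has a ℂ-basis consisting of functions all of whose values lie in S. -/

import Mathlib

noncomputable section

open SemidirectProduct

variable {A : Type*} [CommGroup A] [Fintype A]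

/-- The semidirect product `G = A ⋊ H`, for `H` a subgroup of `Aut(A)`. -/
abbrev Gsd (H : Subgroup (MulAut A)) : Type _ := A ⋊[H.subtype] H

/-- The `G`-representation on `ℂ[A] = (A → ℂ)`: `a₀ ∈ A` acts by `(a₀·f)(x) = f(x·a₀)` and
`h ∈ H` acts by `(h·f)(x) = f(h⁻¹ x)`. -/
def rho (H : Subgroup (MulAut A)) (g : Gsd H) : (A → ℂ) →ₗ[ℂ] (A → ℂ) where
  toFun f := fun x => f (((g.right : MulAut A))⁻¹ (x * g.left))
  map_add' _ _ := rfl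
  map_smul' _ _ := rfl

/-- `M` is a `G`-subrepresentation of `ℂ[A]`. -/
def IsSubrep (H : Subgroup (MulAut A)) (M : Submodule ℂ (A → ℂ)) : Prop :=
  ∀ (g : Gsd H) (f : A → ℂ), f ∈ M → rho H g f ∈ M

/-- `M` is an irreducible `G`-subrepresentation of `ℂ[A]`. -/
def IsIrred (H : Subgroup (MulAut A)) (M : Submodule ℂ (A → ℂ)) : Prop :=
  M ≠ ⊥ ∧ ∀ N : Submodule ℂ (A → ℂ), N ≤ M → IsSubrep H N → N = ⊥ ∨ N = M

/-- A character `χ : A →* ℂ` regarded as an element of `ℂ[A] = (A → ℂ)`. -/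
def charFun (χ : A →* ℂ) : A → ℂ := fun a => χ a

/-- The left-regular `G`-action on `ℂ[G]`, identified with functions `G → ℂ`:
`(g·F)(x) = F(g⁻¹x)`. -/
def lreg (H : Subgroup (MulAut A)) (g : Gsd H) : (Gsd H → ℂ) →ₗ[ℂ] (Gsd H → ℂ) where
  toFun F := fun x => F (g⁻¹ * x)
  map_add' _ _ := rfl
  map_smul' _ _ := rfl

/-- `U` is a `G`-subrepresentation of `ℂ[G]` (for the left-regular action). -/
def IsSubrepG (H : Subgroup (MulAut A)) (U : Submodule ℂ (Gsd H → ℂ)) : Prop :=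
  ∀ (g : Gsd H) (F : Gsd H → ℂ), F ∈ U → lreg H g F ∈ U

/-- `U ⊆ ℂ[G]` is isomorphic, as a `G`-representation, to the subrepresentation
`M ⊆ ℂ[A]`: there is an injective `ℂ`-linear `G`-equivariant map from `M` onto `U`. -/
def IsoToSub (H : Subgroup (MulAut A)) (M : Submodule ℂ (A → ℂ))
    (U : Submodule ℂ (Gsd H → ℂ)) : Prop :=
  ∃ T : ↥M →ₗ[ℂ] (Gsd H → ℂ),
    Function.Injective T ∧ LinearMap.range T = U ∧
    ∀ (g : Gsd H) (m m' : ↥M),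
      (m' : A → ℂ) = rho H g (m : A → ℂ) → T m' = lreg H g (T m)

/-- The `M`-isotypic component of `ℂ[G]`: the sum of all subrepresentations of `ℂ[G]`
isomorphic to `M`. -/
def isotypic (H : Subgroup (MulAut A)) (M : Submodule ℂ (A → ℂ)) :
    Submodule ℂ (Gsd H → ℂ) :=
  sSup {U | IsSubrepG H U ∧ IsoToSub H M U}

/-- `W^H = {f ∈ W : f(h·x) = f(x) for all h ∈ H, x ∈ G}`, for `W` the `M`-isotypic component
of `ℂ[G]`. -/
def isotypicHFixed (H : Subgroup (MulAut A)) (M : Submodule ℂ (A → ℂ)) :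
    Submodule ℂ (Gsd H → ℂ) where
  carrier := {F | F ∈ isotypic H M ∧ ∀ (h : H) (x : Gsd H), F (inr h * x) = F x}
  add_mem' := by
    rintro f g ⟨hf1, hf2⟩ ⟨hg1, hg2⟩
    exact ⟨add_mem hf1 hg1, fun h x => by
      simp only [Pi.add_apply, hf2 h x, hg2 h x]⟩
  zero_mem' := ⟨zero_mem _, fun _ _ => rfl⟩
  smul_mem' := by
    rintro c f ⟨hf1, hf2⟩
    exact ⟨Submodule.smul_mem _ c hf1, fun h x => by
      simp only [Pi.smul_apply, hf2 h x]⟩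

namespace St6
set_option linter.unusedSectionVars false

def invChar (χ : A →* ℂ) : A →* ℂ where
  toFun a := (χ a)⁻¹
  map_one' := by simp
  map_mul' a b := by simp [mul_inv]; ring

lemma char_ne_zero (χ : A →* ℂ) (a : A) : χ a ≠ 0 := by
  have h : χ a * χ a⁻¹ = 1 := by rw [← map_mul, mul_inv_cancel, map_one]
  exact left_ne_zero_of_mul_eq_one h

lemma char_inv (χ : A →* ℂ) (a : A) : χ a⁻¹ = (χ a)⁻¹ :=
  eq_inv_of_mul_eq_one_left (by rw [← map_mul, inv_mul_cancel, map_one])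

lemma invChar_injective : Function.Injective (invChar (A := A)) := by
  intro χ ψ h
  ext a
  have := congrArg (fun f => (f : A →* ℂ) a) h
  simpa [invChar, inv_inj] using this

lemma sum_char_mul_inv (χ ψ : A →* ℂ) :
    ∑ b : A, χ b * (ψ b)⁻¹ = if ψ = χ then (Fintype.card A : ℂ) else 0 := by
  by_cases h : ψ = χ
  · subst h
    simp [mul_inv_cancel₀ (char_ne_zero ψ _)]
  · simp only [h, if_false]
    have hc : ∃ c : A, χ c ≠ ψ c := by
      by_contra hcon
      push_neg at hcon
      exact h (MonoidHom.ext fun a => (hcon a).symm)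
    obtain ⟨c, hc⟩ := hc
    set θ : A → ℂ := fun b => χ b * (ψ b)⁻¹ with hθ
    have hre : ∑ b : A, θ (c * b) = ∑ b : A, θ b :=
      Fintype.sum_bijective (c * ·) (Group.mulLeft_bijective c) _ _ (fun b => rfl)
    have hmul : ∀ b, θ (c * b) = θ c * θ b := by
      intro b
      simp only [hθ, map_mul, mul_inv]
      ring
    have key : θ c * ∑ b : A, θ b = ∑ b : A, θ b := by
      calc θ c * ∑ b : A, θ b = ∑ b : A, θ c * θ b := Finset.mul_sum _ _ _
        _ = ∑ b : A, θ (c * b) := Finset.sum_congr rfl (fun b _ => (hmul b).symm)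
        _ = ∑ b : A, θ b := hre
    have hθc : θ c ≠ 1 := by
      intro h1
      apply hc
      have := h1
      simp only [hθ] at this
      field_simp at this
      exact div_eq_one_iff_eq (char_ne_zero ψ c) |>.mp this
    have : (θ c - 1) * ∑ b : A, θ b = 0 := by rw [sub_mul, key]; ring
    rcases mul_eq_zero.mp this with h' | h'
    · exact absurd (by linear_combination h' : θ c = 1) hθc
    · exact h'


variable (H : Subgroup (MulAut A)) (Φ : Finset (A →* ℂ)) (χ₀ : A →* ℂ)

section Orbit

variable (hΦ : (↑Φ : Set (A →* ℂ)) = {ψ | ∃ h ∈ H, ∀ x : A, ψ x = χ₀ (h⁻¹ x)})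
include hΦ

lemma chi0_mem : χ₀ ∈ Φ := by
  have : χ₀ ∈ (↑Φ : Set (A →* ℂ)) := by
    rw [hΦ]; exact ⟨1, one_mem H, fun x => by simp⟩
  exact_mod_cast this

lemma comp_mem {χ : A →* ℂ} (hχ : χ ∈ Φ) {σ : MulAut A} (hσ : σ ∈ H) :
    χ.comp σ.toMonoidHom ∈ Φ := by
  have h1 : χ ∈ (↑Φ : Set (A →* ℂ)) := hχ
  rw [hΦ] at h1
  obtain ⟨h, hH, hval⟩ := h1
  have : χ.comp σ.toMonoidHom ∈ {ψ : A →* ℂ | ∃ h ∈ H, ∀ x : A, ψ x = χ₀ (h⁻¹ x)} := by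
    refine ⟨σ⁻¹ * h, mul_mem (inv_mem hσ) hH, fun x => ?_⟩
    have := hval (σ x)
    simpa [mul_inv_rev] using this
  rw [← hΦ] at this
  exact_mod_cast this

lemma sum_comp {σ : MulAut A} (hσ : σ ∈ H) (u : (A →* ℂ) → ℂ) :
    ∑ χ ∈ Φ, u (χ.comp σ.toMonoidHom) = ∑ χ ∈ Φ, u χ := by
  apply Finset.sum_nbij' (fun χ => χ.comp σ.toMonoidHom)
    (fun χ => χ.comp (σ⁻¹ : MulAut A).toMonoidHom)
  · intro χ hχ; exact comp_mem H Φ χ₀ hΦ hχ hσ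
  · intro χ hχ; exact comp_mem H Φ χ₀ hΦ hχ (inv_mem hσ)
  · intro χ _; ext x; simp
  · intro χ _; ext x; simp
  · intro χ _; rfl

end Orbit


variable (H : Subgroup (MulAut A))

/-- Matrix-coefficient-type function. -/
def Gb (b : A) (χ : A →* ℂ) : Gsd H → ℂ :=
  fun x => (χ (x.left * (x.right : MulAut A) b))⁻¹

/-- Candidate basis vectors. -/
def eb (Φ : Finset (A →* ℂ)) (b : A) : Gsd H → ℂ :=
  fun x => (Φ.card : ℂ)⁻¹ * ∑ χ ∈ Φ, (χ (x.left * (x.right : MulAut A) b))⁻¹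

lemma lreg_Gb (b : A) (χ : A →* ℂ) (g : Gsd H) :
    lreg H g (Gb H b χ) =
      (χ (((g.right : MulAut A))⁻¹ g.left)) •
        Gb H b (χ.comp (((g.right : MulAut A))⁻¹ : MulAut A).toMonoidHom) := by
  funext x
  simp only [lreg, Gb, LinearMap.coe_mk, AddHom.coe_mk, Pi.smul_apply, smul_eq_mul,
    mul_left, mul_right, inv_left, inv_right, MonoidHom.coe_comp, Function.comp_apply,
    MulEquiv.coe_toMonoidHom]
  have hco : ∀ (h : H) (a : A), (H.subtype h) a = (h : MulAut A) a := fun _ _ => rfl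
  rw [hco, hco]
  have h1 : ((g.right⁻¹ * x.right : H) : MulAut A) b
      = ((g.right : MulAut A))⁻¹ ((x.right : MulAut A) b) := rfl
  rw [h1]
  have hc2 : ((g.right⁻¹ : H) : MulAut A) = ((g.right : MulAut A))⁻¹ := rfl
  rw [hc2]
  have h2 : ((g.right : MulAut A))⁻¹ (g.left⁻¹) * ((g.right : MulAut A))⁻¹ x.left *
      ((g.right : MulAut A))⁻¹ ((x.right : MulAut A) b)
      = ((g.right : MulAut A))⁻¹ (g.left⁻¹ * (x.left * (x.right : MulAut A) b)) := by
    simp [map_mul, mul_assoc]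
  have h3 : ((g.right : MulAut A))⁻¹ (g.left⁻¹ * (x.left * (x.right : MulAut A) b))
      = (((g.right : MulAut A))⁻¹ g.left)⁻¹ *
        ((g.right : MulAut A))⁻¹ (x.left * (x.right : MulAut A) b) := by
    simp [map_mul]
  rw [h2, h3, map_mul, char_inv, mul_inv, inv_inv]

lemma rho_char (χ : A →* ℂ) (g : Gsd H) :
    rho H g (charFun χ) =
      (χ (((g.right : MulAut A))⁻¹ g.left)) •
        charFun (χ.comp (((g.right : MulAut A))⁻¹ : MulAut A).toMonoidHom) := by
  funext x
  simp only [rho, charFun, LinearMap.coe_mk, AddHom.coe_mk, Pi.smul_apply, smul_eq_mul,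
    MonoidHom.coe_comp, Function.comp_apply, MulEquiv.coe_toMonoidHom]
  rw [map_mul, map_mul]
  ring


end St6
section Main

variable (H : Subgroup (MulAut A)) (Φ : Finset (A →* ℂ)) (χ₀ : A →* ℂ)
  (M : Submodule ℂ (A → ℂ))
set_option linter.unusedSectionVars false

/-- The characters in `Φ`, as functions. -/
def vChar : {x // x ∈ Φ} → (A → ℂ) := fun χ => charFun (χ : A →* ℂ)

lemma vChar_li : LinearIndependent ℂ (vChar Φ) :=
  (linearIndependent_monoidHom A ℂ).comp _ Subtype.val_injective

lemma vChar_span (hMdef : M = Submodule.span ℂ (charFun '' ↑Φ)) : Submodule.span ℂ (Set.range (vChar Φ)) = M := by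
  have h : Set.range (vChar Φ) = charFun '' ↑Φ := by
    rw [show vChar Φ = charFun ∘ (Subtype.val) from rfl, Set.range_comp, Subtype.range_coe]
  rw [hMdef, h]

/-- basis of M given by the characters in Φ -/
def Bas (hMdef : M = Submodule.span ℂ (charFun '' ↑Φ)) : Module.Basis {x // x ∈ Φ} ℂ ↥M :=
  (Module.Basis.span (vChar_li Φ)).map (LinearEquiv.ofEq _ _ (vChar_span Φ M hMdef))

lemma Bas_coe (hMdef : M = Submodule.span ℂ (charFun '' ↑Φ)) (χ : {x // x ∈ Φ}) :
    ((Bas Φ M hMdef χ : ↥M) : A → ℂ) = charFun (χ : A →* ℂ) := by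
  show ((LinearEquiv.ofEq _ _ (vChar_span Φ M hMdef) ((Module.Basis.span (vChar_li Φ)) χ) : ↥M) : A → ℂ)
      = charFun (χ : A →* ℂ)
  rw [LinearEquiv.coe_ofEq_apply, Module.Basis.span_apply]
  rfl

/-- the subrepresentation attached to b -/
def Ub (b : A) : Submodule ℂ (Gsd H → ℂ) :=
  Submodule.span ℂ (Set.range fun χ : {x // x ∈ Φ} => St6.Gb H b (χ : A →* ℂ))

lemma Gb_li (b : A) :
    LinearIndependent ℂ (fun χ : {x // x ∈ Φ} => St6.Gb H b (χ : A →* ℂ)) := by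
  let R : (Gsd H → ℂ) →ₗ[ℂ] (A → ℂ) :=
    { toFun := fun F => fun a => F ⟨a * b⁻¹, 1⟩
      map_add' := fun _ _ => rfl
      map_smul' := fun _ _ => rfl }
  apply LinearIndependent.of_comp R
  have hcomp : (R ∘ fun χ : {x // x ∈ Φ} => St6.Gb H b (χ : A →* ℂ))
      = fun χ : {x // x ∈ Φ} => charFun (St6.invChar (χ : A →* ℂ)) := by
    funext χ a
    show ((χ : A →* ℂ) (a * b⁻¹ * ((1 : H) : MulAut A) b))⁻¹ = _
    norm_num [charFun, St6.invChar, mul_assoc]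
  rw [hcomp]
  exact (linearIndependent_monoidHom A ℂ).comp _
    (fun x y hxy => Subtype.val_injective (St6.invChar_injective hxy))

/-- the intertwiner onto Ub -/
def Tb (hMdef : M = Submodule.span ℂ (charFun '' ↑Φ)) (b : A) : ↥M →ₗ[ℂ] (Gsd H → ℂ) :=
  (Bas Φ M hMdef).constr ℂ (fun χ : {x // x ∈ Φ} => St6.Gb H b (χ : A →* ℂ))

lemma Ub_isSubrepG (hΦ : (↑Φ : Set (A →* ℂ)) = {ψ | ∃ h ∈ H, ∀ x : A, ψ x = χ₀ (h⁻¹ x)}) (b : A) : IsSubrepG H (Ub H Φ b) := by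
  intro g F hF
  induction hF using Submodule.span_induction with
  | mem F hF =>
      obtain ⟨χ, rfl⟩ := hF
      rw [St6.lreg_Gb]
      refine Submodule.smul_mem _ _ (Submodule.subset_span ?_)
      exact ⟨⟨(χ : A →* ℂ).comp (((g.right : MulAut A))⁻¹ : MulAut A).toMonoidHom,
        St6.comp_mem H Φ χ₀ hΦ χ.2 (H.inv_mem g.right.2)⟩, rfl⟩
  | zero => rw [map_zero]; exact Submodule.zero_mem _
  | add F G _ _ hF hG => rw [map_add]; exact Submodule.add_mem _ hF hG
  | smul c F _ hF => rw [map_smul]; exact Submodule.smul_mem _ _ hF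

lemma Ub_mem (hΦ : (↑Φ : Set (A →* ℂ)) = {ψ | ∃ h ∈ H, ∀ x : A, ψ x = χ₀ (h⁻¹ x)})
    (hMdef : M = Submodule.span ℂ (charFun '' ↑Φ)) (hM : IsSubrep H M) (b : A) : Ub H Φ b ∈ {U | IsSubrepG H U ∧ IsoToSub H M U} := by
  refine ⟨Ub_isSubrepG H Φ χ₀ hΦ b, Tb H Φ M hMdef b, ?_, ?_, ?_⟩
  · -- injectivity
    intro m m' hmm
    have h0 : Tb H Φ M hMdef b (m - m') = 0 := by rw [map_sub, hmm, sub_self]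
    rw [Tb, Module.Basis.constr_apply, ← Finsupp.linearCombination_apply] at h0
    have h1 := linearIndependent_iff.mp (Gb_li H Φ b) _ h0
    have h2 : m - m' = 0 := by
      have := congrArg (Bas Φ M hMdef).repr.symm h1
      simpa using this
    exact sub_eq_zero.mp h2
  · -- range
    rw [Tb, Module.Basis.constr_range]; rfl
  · -- equivariance
    intro g m m' hcoe
    set ρg : ↥M →ₗ[ℂ] ↥M := (rho H g).restrict (fun x hx => hM g x hx) with hρg
    have hm' : m' = ρg m := Subtype.ext (by rw [hcoe]; rfl)
    rw [hm']
    have key : (Tb H Φ M hMdef b) ∘ₗ ρg = (lreg H g) ∘ₗ (Tb H Φ M hMdef b) := by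
      apply (Bas Φ M hMdef).ext
      intro χ
      set χ' : A →* ℂ :=
        (χ : A →* ℂ).comp (((g.right : MulAut A))⁻¹ : MulAut A).toMonoidHom with hχ'
      have hχ'mem : χ' ∈ Φ := St6.comp_mem H Φ χ₀ hΦ χ.2 (H.inv_mem g.right.2)
      set c : ℂ := (χ : A →* ℂ) (((g.right : MulAut A))⁻¹ g.left) with hc
      have hstep : ρg (Bas Φ M hMdef χ) = c • Bas Φ M hMdef ⟨χ', hχ'mem⟩ := by
        apply Subtype.ext
        show rho H g ((Bas Φ M hMdef χ : ↥M) : A → ℂ) = _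
        rw [Bas_coe, St6.rho_char]
        have : ((c • Bas Φ M hMdef ⟨χ', hχ'mem⟩ : ↥M) : A → ℂ)
            = c • ((Bas Φ M hMdef ⟨χ', hχ'mem⟩ : ↥M) : A → ℂ) := rfl
        rw [this, Bas_coe]
      simp only [LinearMap.comp_apply, hstep, map_smul]
      rw [Tb, Module.Basis.constr_basis, Module.Basis.constr_basis, St6.lreg_Gb]
    have := congrArg (fun T => T m) key
    simpa using this

lemma eb_mem_isotypic (hΦ : (↑Φ : Set (A →* ℂ)) = {ψ | ∃ h ∈ H, ∀ x : A, ψ x = χ₀ (h⁻¹ x)})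
    (hMdef : M = Submodule.span ℂ (charFun '' ↑Φ)) (hM : IsSubrep H M) (b : A) : St6.eb H Φ b ∈ isotypic H M := by
  have hle : Ub H Φ b ≤ isotypic H M := le_sSup (Ub_mem H Φ χ₀ M hΦ hMdef hM b)
  apply hle
  have : St6.eb H Φ b
      = (Φ.card : ℂ)⁻¹ • ∑ χ ∈ Φ.attach, St6.Gb H b (χ : A →* ℂ) := by
    funext x
    simp only [St6.eb, St6.Gb, Pi.smul_apply, smul_eq_mul, Finset.sum_apply]
    rw [← Finset.sum_attach Φ (fun χ => (χ (x.left * (x.right : MulAut A) b))⁻¹)]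
  rw [this]
  exact Submodule.smul_mem _ _ (Submodule.sum_mem _ fun χ _ =>
    Submodule.subset_span ⟨χ, rfl⟩)

lemma eb_invariant (hΦ : (↑Φ : Set (A →* ℂ)) = {ψ | ∃ h ∈ H, ∀ x : A, ψ x = χ₀ (h⁻¹ x)}) (b : A) (h : H) (x : Gsd H) :
    St6.eb H Φ b (inr h * x) = St6.eb H Φ b x := by
  simp only [St6.eb]
  congr 1
  have h1 : (inr h * x : Gsd H).left = (h : MulAut A) x.left := by
    rw [mul_left]; simp
  have h2 : ((inr h * x : Gsd H).right : MulAut A) b = (h : MulAut A) ((x.right : MulAut A) b) := by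
    rw [mul_right]; rfl
  rw [h1, h2, show ((h : MulAut A) x.left * (h : MulAut A) ((x.right : MulAut A) b))
    = (h : MulAut A) (x.left * (x.right : MulAut A) b) from (map_mul _ _ _).symm]
  exact St6.sum_comp H Φ χ₀ hΦ h.2
    (fun ψ => (ψ (x.left * (x.right : MulAut A) b))⁻¹)

end Main
section Main2

variable (H : Subgroup (MulAut A)) (Φ : Finset (A →* ℂ)) (χ₀ : A →* ℂ)
  (M : Submodule ℂ (A → ℂ))
set_option linter.unusedSectionVars false

/-- span of the inverse characters -/
def Minv : Submodule ℂ (A → ℂ) :=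
  Submodule.span ℂ (Set.range fun χ : {x // x ∈ Φ} => charFun (St6.invChar (χ : A →* ℂ)))

/-- functions on G whose A-slices all lie in Minv -/
def Vsub : Submodule ℂ (Gsd H → ℂ) where
  carrier := {F | ∀ h : H, (fun a => F ⟨a, h⟩) ∈ Minv Φ}
  add_mem' := fun hf hg h => Submodule.add_mem _ (hf h) (hg h)
  zero_mem' := fun h => Submodule.zero_mem _
  smul_mem' := fun c f hf h => Submodule.smul_mem _ c (hf h)

lemma isotypic_le_V (hMdef : M = Submodule.span ℂ (charFun '' ↑Φ)) :
    isotypic H M ≤ Vsub H Φ := by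
  apply sSup_le
  rintro U ⟨hUsub, T, hTinj, hTrange, hTequiv⟩
  intro F hF
  rw [← hTrange] at hF
  obtain ⟨m, rfl⟩ := hF
  -- enough to prove for all m
  have key : ∀ χ : {x // x ∈ Φ}, T (Bas Φ M hMdef χ) ∈ Vsub H Φ := by
    intro χ
    set u : Gsd H → ℂ := T (Bas Φ M hMdef χ) with hu
    have heig : ∀ a₀ : A, lreg H (inl a₀) u = ((χ : A →* ℂ) a₀) • u := by
      intro a₀
      have hcoe : (((((χ : A →* ℂ) a₀) • Bas Φ M hMdef χ : ↥M)) : A → ℂ)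
          = rho H (inl a₀) ((Bas Φ M hMdef χ : ↥M) : A → ℂ) := by
        funext x
        show ((χ : A →* ℂ) a₀) * ((Bas Φ M hMdef χ : ↥M) : A → ℂ) x = _
        rw [Bas_coe]
        show _ = charFun (χ : A →* ℂ) ((((inl a₀ : Gsd H).right : MulAut A))⁻¹ (x * (inl a₀ : Gsd H).left))
        rw [right_inl, left_inl]
        show ((χ : A →* ℂ) a₀) * (χ : A →* ℂ) x = (χ : A →* ℂ) (((1 : MulAut A))⁻¹ (x * a₀))
        simp [map_mul, mul_comm]
      have := hTequiv (inl a₀) (Bas Φ M hMdef χ) (((χ : A →* ℂ) a₀) • Bas Φ M hMdef χ) hcoe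
      rw [map_smul] at this
      rw [← this, hu]
    have hval : ∀ (a : A) (h : H), u ⟨a, h⟩ = ((χ : A →* ℂ) a)⁻¹ * u ⟨1, h⟩ := by
      intro a h
      have h1 := congrFun (heig a) ⟨a, h⟩
      have h2 : ((inl a : Gsd H))⁻¹ * (⟨a, h⟩ : Gsd H) = (⟨1, h⟩ : Gsd H) := by
        ext <;> simp
      rw [show lreg H (inl a) u (⟨a, h⟩ : Gsd H) = u (((inl a : Gsd H))⁻¹ * ⟨a, h⟩) from rfl,
        h2] at h1
      have h3 : ((χ : A →* ℂ) a) * u ⟨a, h⟩ = u ⟨1, h⟩ := by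
        rw [h1]; simp
      field_simp [St6.char_ne_zero (χ : A →* ℂ) a] at h3 ⊢
      rw [← h3]
    intro h
    have : (fun a => u ⟨a, h⟩) = u ⟨1, h⟩ • charFun (St6.invChar (χ : A →* ℂ)) := by
      funext a
      rw [hval a h]
      show _ = u ⟨1, h⟩ * ((χ : A →* ℂ) a)⁻¹
      ring
    rw [this]
    exact Submodule.smul_mem _ _ (Submodule.subset_span ⟨χ, rfl⟩)
  -- now extend to all of M via the basis
  have htop : (⊤ : Submodule ℂ ↥M) ≤ Submodule.comap T (Vsub H Φ) := by
    rw [← (Bas Φ M hMdef).span_eq]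
    rw [Submodule.span_le]
    rintro m ⟨χ, rfl⟩
    exact key χ
  exact htop (Submodule.mem_top) 

end Main2
section Main3

variable (H : Subgroup (MulAut A)) (Φ : Finset (A →* ℂ)) (χ₀ : A →* ℂ)
  (M : Submodule ℂ (A → ℂ))
set_option linter.unusedSectionVars false

/-- The map sending φ : A → ℂ to the H-invariant function on G extending it. -/
def Theta : (A → ℂ) →ₗ[ℂ] (Gsd H → ℂ) where
  toFun φ := fun x => φ (((x.right : MulAut A))⁻¹ x.left)
  map_add' _ _ := rfl
  map_smul' _ _ := rfl

lemma sum_eb_eq (hΦ : (↑Φ : Set (A →* ℂ)) = {ψ | ∃ h ∈ H, ∀ x : A, ψ x = χ₀ (h⁻¹ x)})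
    (χ : {x // x ∈ Φ}) :
    ∑ b : A, (χ : A →* ℂ) b • St6.eb H Φ b
      = ((Fintype.card A : ℂ) * (Φ.card : ℂ)⁻¹) •
          Theta H (charFun (St6.invChar (χ : A →* ℂ))) := by
  funext x
  set σ : MulAut A := (x.right : MulAut A) with hσ
  set ψ₀ : A →* ℂ := (χ : A →* ℂ).comp ((σ⁻¹ : MulAut A)).toMonoidHom with hψ₀
  have hψ₀mem : ψ₀ ∈ Φ := St6.comp_mem H Φ χ₀ hΦ χ.2 (H.inv_mem x.right.2)
  have expand : ∀ b : A, (χ : A →* ℂ) b * St6.eb H Φ b x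
      = ∑ ψ ∈ Φ, (Φ.card : ℂ)⁻¹ * ((χ : A →* ℂ) b * ((ψ x.left)⁻¹ * (ψ (σ b))⁻¹)) := by
    intro b
    rw [St6.eb, Finset.mul_sum, Finset.mul_sum]
    apply Finset.sum_congr rfl
    intro ψ _
    rw [map_mul, mul_inv]
    ring
  calc (∑ b : A, (χ : A →* ℂ) b • St6.eb H Φ b) x
      = ∑ b : A, (χ : A →* ℂ) b * St6.eb H Φ b x := by simp
    _ = ∑ b : A, ∑ ψ ∈ Φ, (Φ.card : ℂ)⁻¹ *
          ((χ : A →* ℂ) b * ((ψ x.left)⁻¹ * (ψ (σ b))⁻¹)) :=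
        Finset.sum_congr rfl (fun b _ => expand b)
    _ = ∑ ψ ∈ Φ, ∑ b : A, (Φ.card : ℂ)⁻¹ *
          ((χ : A →* ℂ) b * ((ψ x.left)⁻¹ * (ψ (σ b))⁻¹)) := Finset.sum_comm
    _ = ∑ ψ ∈ Φ, (Φ.card : ℂ)⁻¹ * ((ψ x.left)⁻¹ *
          ∑ b : A, (χ : A →* ℂ) b * ((ψ.comp σ.toMonoidHom) b)⁻¹) := by
        apply Finset.sum_congr rfl
        intro ψ _
        rw [Finset.mul_sum, Finset.mul_sum]
        apply Finset.sum_congr rfl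
        intro b _
        show (Φ.card : ℂ)⁻¹ * ((χ : A →* ℂ) b * ((ψ x.left)⁻¹ * (ψ (σ b))⁻¹))
          = (Φ.card : ℂ)⁻¹ * ((ψ x.left)⁻¹ * ((χ : A →* ℂ) b * (ψ (σ b))⁻¹))
        ring
    _ = ∑ ψ ∈ Φ, (Φ.card : ℂ)⁻¹ * ((ψ x.left)⁻¹ *
          (if ψ.comp σ.toMonoidHom = (χ : A →* ℂ) then (Fintype.card A : ℂ) else 0)) := by
        apply Finset.sum_congr rfl
        intro ψ _
        rw [St6.sum_char_mul_inv]
    _ = (Φ.card : ℂ)⁻¹ * ((ψ₀ x.left)⁻¹ * (Fintype.card A : ℂ)) := by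
        rw [Finset.sum_eq_single ψ₀]
        · rw [if_pos]
          ext a
          show (χ : A →* ℂ) (σ⁻¹ (σ a)) = (χ : A →* ℂ) a
          simp
        · intro ψ _ hne
          rw [if_neg, mul_zero, mul_zero]
          intro hcond
          apply hne
          ext a
          have h1 : ψ (σ (σ⁻¹ a)) = (χ : A →* ℂ) (σ⁻¹ a) := by
            rw [← hcond]; rfl
          simpa [hψ₀] using h1
        · intro habs; exact absurd hψ₀mem habs
    _ = (((Fintype.card A : ℂ) * (Φ.card : ℂ)⁻¹) •
          Theta H (charFun (St6.invChar (χ : A →* ℂ)))) x := by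
        show _ = ((Fintype.card A : ℂ) * (Φ.card : ℂ)⁻¹) *
          ((χ : A →* ℂ) (σ⁻¹ x.left))⁻¹
        show (Φ.card : ℂ)⁻¹ * (((χ : A →* ℂ) (σ⁻¹ x.left))⁻¹ * (Fintype.card A : ℂ)) = _
        ring

lemma Theta_mem_span (hΦ : (↑Φ : Set (A →* ℂ)) = {ψ | ∃ h ∈ H, ∀ x : A, ψ x = χ₀ (h⁻¹ x)})
    (χ : {x // x ∈ Φ}) :
    Theta H (charFun (St6.invChar (χ : A →* ℂ)))
      ∈ Submodule.span ℂ (Set.range (St6.eb H Φ)) := by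
  have hA : (Fintype.card A : ℂ) ≠ 0 := by
    exact_mod_cast Nat.cast_ne_zero.mpr Fintype.card_ne_zero
  have hΦ0 : (Φ.card : ℂ) ≠ 0 := by
    exact_mod_cast Nat.cast_ne_zero.mpr (Finset.card_ne_zero_of_mem χ.2)
  have heq : Theta H (charFun (St6.invChar (χ : A →* ℂ)))
      = ((Φ.card : ℂ) * (Fintype.card A : ℂ)⁻¹) •
          ∑ b : A, (χ : A →* ℂ) b • St6.eb H Φ b := by
    rw [sum_eb_eq H Φ χ₀ hΦ χ, smul_smul]
    rw [show ((Φ.card : ℂ) * (Fintype.card A : ℂ)⁻¹) *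
        ((Fintype.card A : ℂ) * (Φ.card : ℂ)⁻¹) = 1 by field_simp]
    rw [one_smul]
  rw [heq]
  exact Submodule.smul_mem _ _ (Submodule.sum_mem _ fun b _ =>
    Submodule.smul_mem _ _ (Submodule.subset_span ⟨b, rfl⟩))

lemma fixed_le_span (hΦ : (↑Φ : Set (A →* ℂ)) = {ψ | ∃ h ∈ H, ∀ x : A, ψ x = χ₀ (h⁻¹ x)})
    (hMdef : M = Submodule.span ℂ (charFun '' ↑Φ)) :
    isotypicHFixed H M ≤ Submodule.span ℂ (Set.range (St6.eb H Φ)) := by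
  intro F hF
  obtain ⟨hFW, hFinv⟩ := hF
  set φ : A → ℂ := fun a => F ⟨a, 1⟩ with hφdef
  have hφ : φ ∈ Minv Φ := isotypic_le_V H Φ M hMdef hFW 1
  have hFΘ : F = Theta H φ := by
    funext x
    have h2 := hFinv x.right⁻¹ x
    have h3 : (inr x.right⁻¹ * x : Gsd H) = ⟨((x.right : MulAut A))⁻¹ x.left, 1⟩ := by
      ext
      · show 1 * ((x.right⁻¹ : H) : MulAut A) x.left = ((x.right : MulAut A))⁻¹ x.left
        rw [one_mul]; rfl
      · simp
    rw [h3] at h2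
    exact h2.symm
  rw [hFΘ]
  have hle : Minv Φ ≤ Submodule.comap (Theta H)
      (Submodule.span ℂ (Set.range (St6.eb H Φ))) := by
    rw [Minv, Submodule.span_le]
    rintro f ⟨χ, rfl⟩
    exact Theta_mem_span H Φ χ₀ hΦ χ
  exact hle hφ

lemma span_le_fixed (hΦ : (↑Φ : Set (A →* ℂ)) = {ψ | ∃ h ∈ H, ∀ x : A, ψ x = χ₀ (h⁻¹ x)})
    (hMdef : M = Submodule.span ℂ (charFun '' ↑Φ)) (hM : IsSubrep H M) :
    Submodule.span ℂ (Set.range (St6.eb H Φ)) ≤ isotypicHFixed H M := by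
  rw [Submodule.span_le]
  rintro F ⟨b, rfl⟩
  exact ⟨eb_mem_isotypic H Φ χ₀ M hΦ hMdef hM b, fun h x => eb_invariant H Φ χ₀ hΦ b h x⟩

lemma span_eq_fixed (hΦ : (↑Φ : Set (A →* ℂ)) = {ψ | ∃ h ∈ H, ∀ x : A, ψ x = χ₀ (h⁻¹ x)})
    (hMdef : M = Submodule.span ℂ (charFun '' ↑Φ)) (hM : IsSubrep H M) :
    Submodule.span ℂ (Set.range (St6.eb H Φ)) = isotypicHFixed H M :=
  le_antisymm (span_le_fixed H Φ χ₀ M hΦ hMdef hM) (fixed_le_span H Φ χ₀ M hΦ hMdef)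

end Main3

/-- Let `Φ` be an `H`-orbit of characters of `A` such that `M = span(Φ)` is an
irreducible `G`-subrepresentation of `ℂ[A]`, and let
`S = {(1/|Φ|) Σ_{χ∈Φ} χ(a) : a ∈ A} ⊆ ℂ`.  Then the space `W^H` of `H`-invariant vectors of
the `M`-isotypic component `W` of `ℂ[G]` has a `ℂ`-basis consisting of functions `G → ℂ` all
of whose values lie in `S`. -/
theorem statement_6 (H : Subgroup (MulAut A)) (Φ : Finset (A →* ℂ)) (χ₀ : A →* ℂ)
    (hΦ : (↑Φ : Set (A →* ℂ)) = {ψ | ∃ h ∈ H, ∀ x : A, ψ x = χ₀ (h⁻¹ x)})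
    (M : Submodule ℂ (A → ℂ)) (hMdef : M = Submodule.span ℂ (charFun '' ↑Φ))
    (hM : IsSubrep H M) (hMirr : IsIrred H M) :
    ∃ B : Finset (Gsd H → ℂ),
      (∀ F ∈ B, ∀ x : Gsd H,
        F x ∈ Set.range (fun a : A => (Φ.card : ℂ)⁻¹ * ∑ χ ∈ Φ, χ a)) ∧
      LinearIndependent ℂ (fun f : ↥(↑B : Set (Gsd H → ℂ)) => (f : Gsd H → ℂ)) ∧
      Submodule.span ℂ (↑B : Set (Gsd H → ℂ)) = isotypicHFixed H M := by
  obtain ⟨s, hs_sub, hs_span, hs_li⟩ := exists_linearIndependent ℂ (Set.range (St6.eb H Φ))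
  have hfin : s.Finite := (Set.finite_range (St6.eb H Φ)).subset hs_sub
  refine ⟨hfin.toFinset, ?_, ?_, ?_⟩
  · intro F hF x
    have hFs : F ∈ s := by rwa [Set.Finite.mem_toFinset] at hF
    obtain ⟨b, rfl⟩ := hs_sub hFs
    refine ⟨(x.left * (x.right : MulAut A) b)⁻¹, ?_⟩
    show (Φ.card : ℂ)⁻¹ * ∑ ψ ∈ Φ, ψ ((x.left * (x.right : MulAut A) b)⁻¹)
      = St6.eb H Φ b x
    rw [St6.eb]
    congr 1
    exact Finset.sum_congr rfl fun ψ _ => St6.char_inv ψ _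
  · have hco : (↑hfin.toFinset : Set (Gsd H → ℂ)) = s := Set.Finite.coe_toFinset hfin
    rw [hco]
    exact hs_li
  · rw [Set.Finite.coe_toFinset, hs_span]
    exact span_eq_fixed H Φ χ₀ M hΦ hMdef hM
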